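/- Let $F$ be a Borel equivalence relation on a standard Borel space $X$ all of whose classes are finite. Then there is a Borel set $B \subseteq X$ meeting every $F$-class in exactly one point (a Borel transversal), and a Borel automorphism $T$ of $X$ that induces $F$ (i.e., the orbits of $T$ are exactly the $F$-classes). -/

import Mathlib

open Set Function MeasureTheory

namespace FinBorelAux

variable {α : Type*}

/-- A countable family of sets can be "enveloped" by Borel sets with empty intersection. -/
def NovSep [MeasurableSpace α] (S : ℕ → Set α) : Prop :=
  ∃ B : ℕ → Set α, (∀ n, MeasurableSet (B n)) ∧ (∀ n, S n ⊆ B n) ∧ (⋂ n, B n) = ∅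

lemma novSep_iUnion [MeasurableSpace α] {S : ℕ → Set α} {k : ℕ} {T : ℕ → Set α}
    (h : ∀ i : ℕ, NovSep (Function.update S k (T i))) :
    NovSep (Function.update S k (⋃ i, T i)) := by
  choose Bf hmeas hsub hempty using h
  refine ⟨fun n => if n = k then ⋃ i, Bf i k else ⋂ i, Bf i n, ?_, ?_, ?_⟩
  · intro n
    by_cases hn : n = k
    · simp only [hn, if_true]
      exact MeasurableSet.iUnion fun i => hmeas i k
    · simp only [hn, if_false]
      exact MeasurableSet.iInter fun i => hmeas i n
  · intro n
    by_cases hn : n = k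
    · subst hn
      simp only [if_true, Function.update_self]
      refine iUnion_subset fun i => ?_
      refine subset_iUnion_of_subset i ?_
      have := hsub i n
      rwa [Function.update_self] at this
    · simp only [hn, if_false, Function.update_of_ne hn]
      refine subset_iInter fun i => ?_
      have := hsub i n
      rwa [Function.update_of_ne hn] at this
  · rw [eq_empty_iff_forall_notMem]
    intro a ha
    have hk := mem_iInter.1 ha k
    simp only [if_true] at hk
    obtain ⟨i, hi⟩ := mem_iUnion.1 hk
    have : a ∈ ⋂ n, Bf i n := by
      refine mem_iInter.2 fun n => ?_
      by_cases hn : n = k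
      · subst hn; exact hi
      · have := mem_iInter.1 ha n
        simp only [hn, if_false] at this
        exact mem_iInter.1 this i
    rw [hempty i] at this
    exact this

theorem novikov_ranges [TopologicalSpace α] [T2Space α] [MeasurableSpace α]
    [OpensMeasurableSpace α] {f : ℕ → (ℕ → ℕ) → α} (hf : ∀ n, Continuous (f n))
    (hdisj : (⋂ n, range (f n)) = ∅) : NovSep (fun n => range (f n)) := by
  by_contra hsep
  -- one-coordinate extension step
  have I : ∀ (σ : ℕ → ℕ → ℕ) (l : ℕ → ℕ) (k : ℕ),
      ¬ NovSep (fun n => f n '' PiNat.cylinder (σ n) (l n)) →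
      ∃ τ : ℕ → ℕ, τ ∈ PiNat.cylinder (σ k) (l k) ∧
        ¬ NovSep (fun n => f n '' PiNat.cylinder ((Function.update σ k τ) n)
          ((Function.update l k (l k + 1)) n)) := by
    intro σ l k
    contrapose!
    intro H
    have key : ∀ i : ℕ, NovSep (Function.update (fun n => f n '' PiNat.cylinder (σ n) (l n)) k
        (f k '' PiNat.cylinder (Function.update (σ k) (l k) i) (l k + 1))) := by
      intro i
      have h1 := H (Function.update (σ k) (l k) i) (PiNat.update_mem_cylinder _ _ _)
      convert h1 using 1
      funext n
      rcases eq_or_ne n k with rfl | hn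
      · simp only [Function.update_self]
      · simp only [Function.update_of_ne hn]
    have h2 := novSep_iUnion key
    convert h2 using 1
    funext n
    rcases eq_or_ne n k with rfl | hn
    · simp only [Function.update_self]
      rw [← PiNat.iUnion_cylinder_update (σ n) (l n), image_iUnion]
    · simp only [Function.update_of_ne hn]
  -- iterate the extension, dovetailing over all coordinates
  let A := {p : ((ℕ → ℕ → ℕ) × (ℕ → ℕ)) × ℕ //
    ¬ NovSep (fun n => f n '' PiNat.cylinder (p.1.1 n) (p.1.2 n))}
  have step : ∀ p : A, ∃ q : A,
      q.1.2 = p.1.2 + 1 ∧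
      q.1.1.2 = Function.update p.1.1.2 (Nat.unpair p.1.2).1
        ((p.1.1.2 (Nat.unpair p.1.2).1) + 1) ∧
      ∀ n, q.1.1.1 n ∈ PiNat.cylinder (p.1.1.1 n) (p.1.1.2 n) := by
    rintro ⟨⟨⟨σ, l⟩, t⟩, hp⟩
    obtain ⟨τ, hτmem, hτ⟩ := I σ l (Nat.unpair t).1 hp
    refine ⟨⟨⟨⟨Function.update σ (Nat.unpair t).1 τ,
      Function.update l (Nat.unpair t).1 (l (Nat.unpair t).1 + 1)⟩, t + 1⟩, hτ⟩, rfl, rfl, ?_⟩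
    intro n
    rcases eq_or_ne n (Nat.unpair t).1 with rfl | hn
    · simpa only [Function.update_self] using hτmem
    · simp only [Function.update_of_ne hn]
      exact PiNat.self_mem_cylinder _ _
  choose G hG1 hG2 hG3 using step
  have hp0 : ¬ NovSep (fun n => f n ''
      PiNat.cylinder ((fun _ _ => 0 : ℕ → ℕ → ℕ) n) ((fun _ => 0 : ℕ → ℕ) n)) := by
    simpa only [PiNat.cylinder_zero, image_univ] using hsep
  let p0 : A := ⟨⟨⟨fun _ _ => 0, fun _ => 0⟩, 0⟩, hp0⟩
  let p : ℕ → A := fun t => G^[t] p0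
  have prec : ∀ t, p (t + 1) = G (p t) := fun t => by
    simp only [p, iterate_succ_apply']
  have hct : ∀ t, (p t).1.2 = t := by
    intro t
    induction t with
    | zero => rfl
    | succ t ih => rw [prec, hG1, ih]
  have hl : ∀ t, (p (t + 1)).1.1.2 = Function.update (p t).1.1.2 (Nat.unpair t).1
      ((p t).1.1.2 (Nat.unpair t).1 + 1) := by
    intro t
    have := hG2 (p t)
    rw [← prec] at this
    rwa [hct t] at this
  have hlmono : ∀ n, Monotone fun t => (p t).1.1.2 n := by
    intro n
    apply monotone_nat_of_le_succ
    intro t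
    rw [hl t]
    rcases eq_or_ne n (Nat.unpair t).1 with rfl | hn
    · rw [Function.update_self]; omega
    · rw [Function.update_of_ne hn]
  have hgrow : ∀ n N, ∃ t, N ≤ (p t).1.1.2 n := by
    intro n N
    induction N with
    | zero => exact ⟨0, Nat.zero_le _⟩
    | succ N ih =>
      obtain ⟨t, ht⟩ := ih
      refine ⟨Nat.pair n t + 1, ?_⟩
      have h1 : (p t).1.1.2 n ≤ (p (Nat.pair n t)).1.1.2 n :=
        hlmono n (Nat.right_le_pair n t)
      have h2 := hl (Nat.pair n t)
      have hk : (Nat.unpair (Nat.pair n t)).1 = n := by simp [Nat.unpair_pair]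
      rw [h2, hk, Function.update_self]
      omega
  have hstab : ∀ s t n, s ≤ t →
      (p t).1.1.1 n ∈ PiNat.cylinder ((p s).1.1.1 n) ((p s).1.1.2 n) := by
    intro s t n hst
    induction t, hst using Nat.le_induction with
    | base => exact PiNat.self_mem_cylinder _ _
    | succ t hst ih =>
      have h1 : (p (t + 1)).1.1.1 n ∈ PiNat.cylinder ((p t).1.1.1 n) ((p t).1.1.2 n) := by
        rw [prec]; exact hG3 (p t) n
      rw [PiNat.mem_cylinder_iff] at h1 ih ⊢
      intro i hi
      rw [h1 i (lt_of_lt_of_le hi (hlmono n hst)), ih i hi]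
  -- the limit points
  let x : ℕ → ℕ → ℕ := fun n j => (p (Nat.find (hgrow n (j + 1)))).1.1.1 n j
  have hx : ∀ t n, x n ∈ PiNat.cylinder ((p t).1.1.1 n) ((p t).1.1.2 n) := by
    intro t n
    rw [PiNat.mem_cylinder_iff]
    intro j hj
    set t₀ := Nat.find (hgrow n (j + 1)) with ht₀def
    have ht₀ : j + 1 ≤ (p t₀).1.1.2 n := Nat.find_spec (hgrow n (j + 1))
    have h1 := hstab t (max t t₀) n (le_max_left _ _)
    have h2 := hstab t₀ (max t t₀) n (le_max_right _ _)
    rw [PiNat.mem_cylinder_iff] at h1 h2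
    have e1 := h1 j hj
    have e2 := h2 j (by omega)
    show (p t₀).1.1.1 n j = (p t).1.1.1 n j
    rw [← e1, ← e2]
  have M : ∀ t, ¬ NovSep (fun n => f n '' PiNat.cylinder (x n) ((p t).1.1.2 n)) := by
    intro t h
    apply (p t).2
    have : ∀ n, PiNat.cylinder (x n) ((p t).1.1.2 n)
        = PiNat.cylinder ((p t).1.1.1 n) ((p t).1.1.2 n) :=
      fun n => PiNat.mem_cylinder_iff_eq.1 (hx t n)
    convert h using 2 with n
    rw [this n]
  -- two of the limit values must differ
  obtain ⟨n₀, n₁, hne⟩ : ∃ n₀ n₁, f n₀ (x n₀) ≠ f n₁ (x n₁) := by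
    by_contra h
    push_neg at h
    have : f 0 (x 0) ∈ ⋂ n, range (f n) :=
      mem_iInter.2 fun n => ⟨x n, h n 0⟩
    rw [hdisj] at this
    exact this
  have hn01 : n₀ ≠ n₁ := by rintro rfl; exact hne rfl
  obtain ⟨u, v, u_open, v_open, xu, yv, huv⟩ := t2_separation hne
  letI : MetricSpace (ℕ → ℕ) := PiNat.metricSpaceNatNat
  obtain ⟨εx, εxpos, hεx⟩ : ∃ εx : ℝ, εx > 0 ∧ Metric.ball (x n₀) εx ⊆ f n₀ ⁻¹' u := by
    apply Metric.mem_nhds_iff.1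
    exact (hf n₀).continuousAt.preimage_mem_nhds (u_open.mem_nhds xu)
  obtain ⟨εy, εypos, hεy⟩ : ∃ εy : ℝ, εy > 0 ∧ Metric.ball (x n₁) εy ⊆ f n₁ ⁻¹' v := by
    apply Metric.mem_nhds_iff.1
    exact (hf n₁).continuousAt.preimage_mem_nhds (v_open.mem_nhds yv)
  obtain ⟨N, hN⟩ : ∃ N : ℕ, (1 / 2 : ℝ) ^ N < min εx εy :=
    exists_pow_lt_of_lt_one (lt_min εxpos εypos) (by norm_num)
  obtain ⟨t₀, ht₀⟩ := hgrow n₀ N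
  obtain ⟨t₁, ht₁⟩ := hgrow n₁ N
  have hN0 : N ≤ (p (max t₀ t₁)).1.1.2 n₀ := le_trans ht₀ (hlmono n₀ (le_max_left _ _))
  have hN1 : N ≤ (p (max t₀ t₁)).1.1.2 n₁ := le_trans ht₁ (hlmono n₁ (le_max_right _ _))
  apply M (max t₀ t₁)
  refine ⟨fun n => if n = n₀ then u else if n = n₁ then v else univ, ?_, ?_, ?_⟩
  · intro n
    dsimp only
    split_ifs
    exacts [u_open.measurableSet, v_open.measurableSet, MeasurableSet.univ]
  · intro n
    dsimp only
    split_ifs with h1 h2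
    · subst h1
      refine subset_trans (image_mono (PiNat.cylinder_anti _ hN0)) ?_
      rw [image_subset_iff]
      refine subset_trans ?_ hεx
      intro z hz
      rw [PiNat.mem_cylinder_iff_dist_le] at hz
      exact lt_of_le_of_lt hz (lt_of_lt_of_le hN (min_le_left _ _))
    · subst h2
      refine subset_trans (image_mono (PiNat.cylinder_anti _ hN1)) ?_
      rw [image_subset_iff]
      refine subset_trans ?_ hεy
      intro z hz
      rw [PiNat.mem_cylinder_iff_dist_le] at hz
      exact lt_of_le_of_lt hz (lt_of_lt_of_le hN (min_le_right _ _))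
    · exact subset_univ _
  · rw [eq_empty_iff_forall_notMem]
    intro a ha
    have h0 := mem_iInter.1 ha n₀
    have h1 := mem_iInter.1 ha n₁
    simp only [if_pos rfl] at h0
    rw [if_neg (Ne.symm hn01), if_pos rfl] at h1
    exact Set.disjoint_left.1 huv h0 h1

theorem novikov [TopologicalSpace α] [T2Space α] [MeasurableSpace α] [OpensMeasurableSpace α]
    (A : ℕ → Set α) (hA : ∀ n, AnalyticSet (A n)) (hdisj : (⋂ n, A n) = ∅) : NovSep A := by
  by_cases hne : ∀ n, (A n).Nonempty
  · have hex : ∀ n, ∃ g : (ℕ → ℕ) → α, Continuous g ∧ range g = A n := by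
      intro n
      have h := hA n
      rw [AnalyticSet] at h
      rcases h with h | h
      · exact absurd h (hne n).ne_empty
      · exact h
    choose g hgc hgr using hex
    have h1 : (⋂ n, range (g n)) = ∅ := by simp_rw [hgr]; exact hdisj
    have h2 := novikov_ranges hgc h1
    have h3 : (fun n => range (g n)) = A := funext hgr
    rwa [h3] at h2
  · push_neg at hne
    obtain ⟨n₀, hn₀⟩ := hne
    refine ⟨fun n => if n = n₀ then ∅ else univ, ?_, ?_, ?_⟩
    · intro n; dsimp only; split_ifs; exacts [MeasurableSet.empty, MeasurableSet.univ]
    · intro n; dsimp only; split_ifs with h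
      · subst h; rw [hn₀]
      · exact subset_univ _
    · rw [eq_empty_iff_forall_notMem]
      intro a ha
      have := mem_iInter.1 ha n₀
      simp only [if_pos rfl] at this
      exact this

lemma mem_fst_image {β γ : Type*} {W : Set (β × γ)} {z : β} :
    z ∈ Prod.fst '' W ↔ ∃ t, (z, t) ∈ W := by
  constructor
  · rintro ⟨⟨a, b⟩, h, rfl⟩; exact ⟨b, h⟩
  · rintro ⟨t, ht⟩; exact ⟨(z, t), ht, rfl⟩

lemma projection_subsingleton {Z : Type*} [MeasurableSpace Z] [StandardBorelSpace Z]
    {A : Set (Z × ℝ)} (hA : MeasurableSet A)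
    (hsub : ∀ z : Z, {t : ℝ | (z, t) ∈ A}.Subsingleton) :
    MeasurableSet (Prod.fst '' A) := by
  apply hA.image_of_measurable_injOn measurable_fst
  rintro ⟨z, t⟩ hp ⟨z', t'⟩ hq (h : z = z')
  subst h
  exact congrArg (Prod.mk z) (hsub z hp hq)

lemma projection_of_bounded : ∀ (n : ℕ) {Z : Type*} [MeasurableSpace Z] [StandardBorelSpace Z]
    (A : Set (Z × ℝ)), MeasurableSet A → (∀ z, {t : ℝ | (z, t) ∈ A}.Finite) →
    (∀ z, {t : ℝ | (z, t) ∈ A}.ncard ≤ n) → MeasurableSet (Prod.fst '' A) := by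
  intro n
  induction n with
  | zero =>
    intro Z _ _ A hA hfin hcard
    have hempty : A = ∅ := by
      rw [eq_empty_iff_forall_notMem]
      rintro ⟨z, t⟩ hzt
      have h0 : {t : ℝ | (z, t) ∈ A} = ∅ :=
        (Set.ncard_eq_zero (hfin z)).1 (Nat.le_zero.1 (hcard z))
      have : t ∈ {t : ℝ | (z, t) ∈ A} := hzt
      rw [h0] at this
      exact this
    rw [hempty]
    simp
  | succ n IH =>
    intro Z _ _ A hA hfin hcard
    set D : Set ((Z × ℝ) × ℝ) := (Prod.fst ⁻¹' A) ∩ ((fun q : (Z × ℝ) × ℝ => (q.1.1, q.2)) ⁻¹' A)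
      ∩ {q : (Z × ℝ) × ℝ | q.1.2 < q.2} with hDdef
    have hDmeas : MeasurableSet D :=
      ((measurable_fst hA).inter ((measurable_fst.fst.prodMk measurable_snd) hA)).inter
        (measurableSet_lt measurable_fst.snd measurable_snd)
    have hDfin : ∀ w : Z × ℝ, {t : ℝ | (w, t) ∈ D}.Finite :=
      fun w => (hfin w.1).subset fun t ht => ht.1.2
    have hDcard : ∀ w : Z × ℝ, {t : ℝ | (w, t) ∈ D}.ncard ≤ n := by
      intro w
      by_cases hw : w ∈ A
      · have hsub2 : {t : ℝ | (w, t) ∈ D} ⊆ {t : ℝ | (w.1, t) ∈ A} \ {w.2} := by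
          rintro t ⟨⟨-, h2⟩, h3⟩
          have h3' : w.2 < t := h3
          refine ⟨h2, fun h => ?_⟩
          rw [mem_singleton_iff] at h
          rw [h] at h3'
          exact lt_irrefl _ h3'
        have hle := Set.ncard_le_ncard hsub2 ((hfin w.1).diff)
        have hmem : w.2 ∈ {t : ℝ | (w.1, t) ∈ A} := by
          show (w.1, w.2) ∈ A
          rw [Prod.mk.eta]
          exact hw
        rw [Set.ncard_diff_singleton_of_mem hmem] at hle
        have := hcard w.1
        omega
      · have h0 : {t : ℝ | (w, t) ∈ D} = ∅ := by
          rw [eq_empty_iff_forall_notMem]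
          rintro t ⟨⟨h1, -⟩, -⟩
          exact hw h1
        rw [h0]
        simp
    have hPhi := IH D hDmeas hDfin hDcard
    set Amax : Set (Z × ℝ) := A \ (Prod.fst '' D) with hAmaxdef
    have hAmaxMeas : MeasurableSet Amax := hA.diff hPhi
    have hAmaxSub : ∀ z, {t : ℝ | (z, t) ∈ Amax}.Subsingleton := by
      intro z t ht t' ht'
      by_contra hne
      rcases lt_or_gt_of_ne hne with hlt | hlt
      · exact ht.2 ⟨((z, t), t'), ⟨⟨ht.1, ht'.1⟩, hlt⟩, rfl⟩
      · exact ht'.2 ⟨((z, t'), t), ⟨⟨ht'.1, ht.1⟩, hlt⟩, rfl⟩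
    have himg : Prod.fst '' Amax = Prod.fst '' A := by
      apply Subset.antisymm (image_mono diff_subset)
      rintro z ⟨⟨z', t⟩, hzt, rfl⟩
      obtain ⟨b, hb, hbmax⟩ :=
        Set.exists_max_image {t : ℝ | (z', t) ∈ A} id (hfin z') ⟨t, hzt⟩
      refine ⟨(z', b), ⟨hb, ?_⟩, rfl⟩
      rintro ⟨⟨⟨z'', s⟩, s'⟩, ⟨⟨h1, h2⟩, h3⟩, hqe⟩
      have hz : z'' = z' := congrArg Prod.fst hqe
      have hs : s = b := congrArg Prod.snd hqe
      subst hz; subst hs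
      exact absurd (hbmax s' h2) (not_le.2 h3)
    rw [← himg]
    exact projection_subsingleton hAmaxMeas hAmaxSub

lemma proj_of_covered {Z X : Type*} [MeasurableSpace Z] [StandardBorelSpace Z] [MeasurableSpace X]
    (C : Set (X × ℝ)) (hCfin : ∀ x, {t : ℝ | (x, t) ∈ C}.Finite)
    (P : ℕ → Set X) (hPmeas : ∀ n, MeasurableSet (P n)) (hPcov : ∀ x, ∃ n, x ∈ P n)
    (hPcard : ∀ n x, x ∈ P n → {t : ℝ | (x, t) ∈ C}.ncard ≤ n)
    {ζ : Z → X} (hζ : Measurable ζ)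
    {W : Set (Z × ℝ)} (hW : MeasurableSet W)
    (hsec : ∀ z t, (z, t) ∈ W → (ζ z, t) ∈ C) :
    MeasurableSet (Prod.fst '' W) := by
  have hcov : Prod.fst '' W = ⋃ n, Prod.fst '' (W ∩ ((ζ ⁻¹' P n) ×ˢ (univ : Set ℝ))) := by
    apply Subset.antisymm
    · rintro z ⟨⟨z', t⟩, hzt, rfl⟩
      obtain ⟨n, hn⟩ := hPcov (ζ z')
      exact mem_iUnion.2 ⟨n, ⟨(z', t), ⟨hzt, ⟨hn, trivial⟩⟩, rfl⟩⟩
    · exact iUnion_subset fun n => image_mono inter_subset_left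
  rw [hcov]
  refine MeasurableSet.iUnion fun n => ?_
  apply projection_of_bounded n
  · exact hW.inter ((hζ (hPmeas n)).prod MeasurableSet.univ)
  · intro z
    exact (hCfin (ζ z)).subset fun t ht => hsec z t ht.1
  · intro z
    by_cases hz : ζ z ∈ P n
    · refine le_trans (Set.ncard_le_ncard ?_ (hCfin (ζ z))) (hPcard n (ζ z) hz)
      exact fun t ht => hsec z t ht.1
    · have h0 : {t : ℝ | (z, t) ∈ W ∩ ((ζ ⁻¹' P n) ×ˢ (univ : Set ℝ))} = ∅ := by
        rw [eq_empty_iff_forall_notMem]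
        rintro t ⟨-, hzp, -⟩
        exact hz hzp
      rw [h0]
      simp

lemma measurable_of_measurable_graph {β γ : Type*} [MeasurableSpace β] [StandardBorelSpace β]
    [MeasurableSpace γ] [StandardBorelSpace γ] {g : β → γ}
    (hG : MeasurableSet {p : β × γ | g p.1 = p.2}) : Measurable g := by
  intro s hs
  have h1 : g ⁻¹' s = Prod.fst '' ({p : β × γ | g p.1 = p.2} ∩ ((univ : Set β) ×ˢ s)) := by
    apply Subset.antisymm
    · intro x hx
      exact ⟨(x, g x), ⟨rfl, ⟨trivial, hx⟩⟩, rfl⟩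
    · rintro x ⟨⟨x', y⟩, ⟨hg1, ⟨-, hy⟩⟩, rfl⟩
      show g x' ∈ s
      rw [show g x' = y from hg1]
      exact hy
  rw [h1]
  apply (hG.inter (MeasurableSet.univ.prod hs)).image_of_measurable_injOn measurable_fst
  rintro ⟨a, b⟩ ⟨hab, -⟩ ⟨a', b'⟩ ⟨hab', -⟩ (h : a = a')
  subst h
  exact congrArg (Prod.mk a) ((show g a = b from hab).symm.trans hab')

end FinBorelAux

section
open Set Function MeasureTheory FinBorelAux

/-- Every finite Borel equivalence relation on a standard Borel space admits a
Borel transversal and is induced by a Borel automorphism (Luzin–Novikov). -/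
theorem finite_borel_equiv_transversal_and_automorphism
    {X : Type*} [MeasurableSpace X] [StandardBorelSpace X]
    (F : X → X → Prop) (hequiv : Equivalence F)
    (hFborel : MeasurableSet {p : X × X | F p.1 p.2})
    (hfin : ∀ x : X, {y | F x y}.Finite) :
    (∃ B : Set X, MeasurableSet B ∧ ∀ x : X, ∃! y, y ∈ B ∧ F x y) ∧
    (∃ T : X ≃ X, Measurable (⇑T) ∧ Measurable (⇑T.symm) ∧
      ∀ x y : X, F x y ↔ ∃ n : ℕ, (⇑T)^[n] x = y) := by

  classical
  obtain ⟨e, he⟩ := exists_measurableEmbedding_real X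
  have heinj : Function.Injective e := he.injective
  set Fs : Set (X × X) := {p : X × X | F p.1 p.2} with hFsdef
  set E : Set (X × ℝ) := (fun p : X × X => (p.1, e p.2)) '' Fs with hEdef
  have hEmeas : MeasurableSet E :=
    (MeasurableEmbedding.id.prodMap he).measurableSet_image.2 hFborel
  have hEmem : ∀ (x : X) (t : ℝ), ((x, t) ∈ E ↔ ∃ y, F x y ∧ e y = t) := by
    intro x t
    constructor
    · rintro ⟨⟨a, b⟩, hab, hab2⟩
      have h1 : a = x := congrArg Prod.fst hab2
      have h2 : e b = t := congrArg Prod.snd hab2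
      subst h1
      exact ⟨b, hab, h2⟩
    · rintro ⟨y, hy, hyt⟩
      exact ⟨(x, y), hy, by rw [← hyt]⟩
  have hEsec : ∀ x : X, {t : ℝ | (x, t) ∈ E} = e '' {y | F x y} := by
    intro x
    ext t
    rw [mem_setOf_eq, hEmem]
    simp [mem_image, eq_comm]
  have hEfin : ∀ x : X, {t : ℝ | (x, t) ∈ E}.Finite := by
    intro x; rw [hEsec]; exact (hfin x).image e
  have hEcard : ∀ x : X, {t : ℝ | (x, t) ∈ E}.ncard = {y | F x y}.ncard := by
    intro x; rw [hEsec]; exact Set.ncard_image_of_injective _ heinj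
  -- upgrade to a Polish topology
  letI := upgradeStandardBorel X
  -- the class-size witness sets are analytic
  have hSmeas : ∀ n : ℕ, MeasurableSet
      {w : X × (Fin n → X) | (∀ i, F w.1 (w.2 i)) ∧ Function.Injective w.2} := by
    intro n
    have h1 : MeasurableSet {w : X × (Fin n → X) | ∀ i, F w.1 (w.2 i)} := by
      have hs : {w : X × (Fin n → X) | ∀ i, F w.1 (w.2 i)}
          = ⋂ i, (fun w : X × (Fin n → X) => (w.1, w.2 i)) ⁻¹' Fs := by
        ext w
        simp only [mem_iInter, mem_preimage, mem_setOf_eq]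
        rfl
      rw [hs]
      exact MeasurableSet.iInter fun i =>
        (measurable_fst.prodMk ((measurable_pi_apply i).comp measurable_snd)) hFborel
    have h2 : MeasurableSet {w : X × (Fin n → X) | Function.Injective w.2} := by
      have hset : {w : X × (Fin n → X) | Function.Injective w.2}
          = ⋂ (i : Fin n) (j : Fin n) (_ : i ≠ j),
            {w : X × (Fin n → X) | e (w.2 i) ≠ e (w.2 j)} := by
        ext w
        simp only [mem_iInter, mem_setOf_eq]
        constructor
        · intro hinj i j hij hee
          exact hij (hinj (heinj hee))
        · intro h i j hij
          by_contra hne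
          exact h i j hne (congrArg e hij)
      rw [hset]
      refine MeasurableSet.iInter fun i => MeasurableSet.iInter fun j =>
        MeasurableSet.iInter fun _ => ?_
      have hc : {w : X × (Fin n → X) | e (w.2 i) ≠ e (w.2 j)}
          = ((fun w : X × (Fin n → X) => e (w.2 i) - e (w.2 j)) ⁻¹' {0})ᶜ := by
        ext w
        simp [sub_eq_zero]
      rw [hc]
      exact (((he.measurable.comp ((measurable_pi_apply i).comp measurable_snd)).sub
        (he.measurable.comp ((measurable_pi_apply j).comp measurable_snd)))
        (measurableSet_singleton 0)).compl
    exact h1.inter h2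
  have hRan : ∀ n : ℕ, AnalyticSet (Prod.fst ''
      {w : X × (Fin n → X) | (∀ i, F w.1 (w.2 i)) ∧ Function.Injective w.2}) :=
    fun n => (hSmeas n).analyticSet_image measurable_fst
  have hmemR : ∀ (n : ℕ) (x : X), (x ∈ Prod.fst ''
      {w : X × (Fin n → X) | (∀ i, F w.1 (w.2 i)) ∧ Function.Injective w.2})
      ↔ ∃ v : Fin n → X, (∀ i, F x (v i)) ∧ Function.Injective v := by
    intro n x
    constructor
    · rintro ⟨⟨x', v⟩, ⟨h1, h2⟩, rfl⟩
      exact ⟨v, h1, h2⟩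
    · rintro ⟨v, h1, h2⟩
      exact ⟨(x, v), ⟨h1, h2⟩, rfl⟩
  have hRiff : ∀ (n : ℕ) (x : X), (x ∈ Prod.fst ''
      {w : X × (Fin n → X) | (∀ i, F w.1 (w.2 i)) ∧ Function.Injective w.2})
      ↔ n ≤ {y | F x y}.ncard := by
    intro n x
    rw [hmemR]
    constructor
    · rintro ⟨v, h1, h2⟩
      have := Set.ncard_le_ncard_of_injOn (s := (univ : Set (Fin n))) v (fun i _ => h1 i) (h2.injOn) (hfin x)
      rwa [Set.ncard_univ, Nat.card_eq_fintype_card, Fintype.card_fin] at this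
    · intro hn
      obtain ⟨t, hts, htc⟩ := Set.exists_subset_card_eq hn
      have htf : t.Finite := (hfin x).subset hts
      have hcard : htf.toFinset.card = n := by
        rw [← Set.ncard_eq_toFinset_card t htf]
        exact htc
      let eqv := Finset.equivFinOfCardEq hcard
      refine ⟨fun i => (eqv.symm i : X), fun i => ?_, ?_⟩
      · have : ((eqv.symm i : htf.toFinset) : X) ∈ t := htf.mem_toFinset.1 (eqv.symm i).2
        exact hts this
      · intro i j hij
        have := Subtype.val_injective hij
        exact eqv.symm.injective this
  have hRint : (⋂ n, Prod.fst ''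
      {w : X × (Fin n → X) | (∀ i, F w.1 (w.2 i)) ∧ Function.Injective w.2}) = ∅ := by
    rw [eq_empty_iff_forall_notMem]
    intro x hx
    have h1 := (hRiff ({y | F x y}.ncard + 1) x).1 (mem_iInter.1 hx _)
    omega
  obtain ⟨Bn, hBmeas, hBsub, hBempty⟩ := FinBorelAux.novikov _ hRan hRint
  have hPmeas : ∀ n, MeasurableSet ((Bn n)ᶜ) := fun n => (hBmeas n).compl
  have hPcov : ∀ x : X, ∃ n, x ∈ (Bn n)ᶜ := by
    intro x
    by_contra h
    push_neg at h
    have : x ∈ ⋂ n, Bn n := mem_iInter.2 fun n => not_not.1 (h n)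
    rw [hBempty] at this
    exact this
  have hPcard : ∀ (n : ℕ) (x : X), x ∈ (Bn n)ᶜ → {t : ℝ | (x, t) ∈ E}.ncard ≤ n := by
    intro n x hx
    rw [hEcard]
    by_contra h
    push_neg at h
    exact hx (hBsub n ((hRiff n x).2 (le_of_lt h)))
  -- three projection sets
  set Bad1 : Set (X × X) :=
    Prod.fst '' {q : (X × X) × ℝ | (q.1.1, q.2) ∈ E ∧ q.2 < e q.1.2} with hBad1def
  have hBad1meas : MeasurableSet Bad1 := by
    apply FinBorelAux.proj_of_covered E hEfin _ hPmeas hPcov hPcard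
      (measurable_fst : Measurable (Prod.fst : X × X → X))
    · have hq : {q : (X × X) × ℝ | (q.1.1, q.2) ∈ E ∧ q.2 < e q.1.2}
          = ((fun q : (X × X) × ℝ => (q.1.1, q.2)) ⁻¹' E)
            ∩ {q : (X × X) × ℝ | q.2 < e q.1.2} := rfl
      rw [hq]
      exact ((measurable_fst.fst.prodMk measurable_snd) hEmeas).inter
        (measurableSet_lt measurable_snd (he.measurable.comp measurable_fst.snd))
    · exact fun z t h => h.1
  have hBad1mem : ∀ p : X × X, (p ∈ Bad1 ↔ ∃ z, F p.1 z ∧ e z < e p.2) := by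
    intro p
    rw [hBad1def, FinBorelAux.mem_fst_image]
    constructor
    · rintro ⟨t, ht1, ht2⟩
      obtain ⟨z, hz, rfl⟩ := (hEmem _ _).1 ht1
      exact ⟨z, hz, ht2⟩
    · rintro ⟨z, hz, hlt⟩
      exact ⟨e z, (hEmem _ _).2 ⟨z, hz, rfl⟩, hlt⟩
  set Up : Set X := Prod.fst '' {q : X × ℝ | q ∈ E ∧ e q.1 < q.2} with hUpdef
  have hUpmeas : MeasurableSet Up := by
    apply FinBorelAux.proj_of_covered E hEfin _ hPmeas hPcov hPcard (measurable_id : Measurable (id : X → X))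
    · exact hEmeas.inter (measurableSet_lt (he.measurable.comp measurable_fst) measurable_snd)
    · exact fun z t h => h.1
  have hUpmem : ∀ x : X, (x ∈ Up ↔ ∃ z, F x z ∧ e x < e z) := by
    intro x
    rw [hUpdef, FinBorelAux.mem_fst_image]
    constructor
    · rintro ⟨t, ht1, ht2⟩
      obtain ⟨z, hz, rfl⟩ := (hEmem _ _).1 ht1
      exact ⟨z, hz, ht2⟩
    · rintro ⟨z, hz, hlt⟩
      exact ⟨e z, (hEmem _ _).2 ⟨z, hz, rfl⟩, hlt⟩
  set Btw : Set (X × X) :=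
    Prod.fst '' {q : (X × X) × ℝ | (q.1.1, q.2) ∈ E ∧ e q.1.1 < q.2 ∧ q.2 < e q.1.2} with hBtwdef
  have hBtwmeas : MeasurableSet Btw := by
    apply FinBorelAux.proj_of_covered E hEfin _ hPmeas hPcov hPcard
      (measurable_fst : Measurable (Prod.fst : X × X → X))
    · have hq : {q : (X × X) × ℝ | (q.1.1, q.2) ∈ E ∧ e q.1.1 < q.2 ∧ q.2 < e q.1.2}
          = ((fun q : (X × X) × ℝ => (q.1.1, q.2)) ⁻¹' E)
            ∩ ({q : (X × X) × ℝ | e q.1.1 < q.2} ∩ {q : (X × X) × ℝ | q.2 < e q.1.2}) := by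
        ext q
        simp only [mem_inter_iff, mem_preimage, mem_setOf_eq]
      rw [hq]
      exact ((measurable_fst.fst.prodMk measurable_snd) hEmeas).inter
        ((measurableSet_lt (he.measurable.comp measurable_fst.fst) measurable_snd).inter
          (measurableSet_lt measurable_snd (he.measurable.comp measurable_fst.snd)))
    · exact fun z t h => h.1
  have hBtwmem : ∀ p : X × X, (p ∈ Btw ↔ ∃ z, F p.1 z ∧ e p.1 < e z ∧ e z < e p.2) := by
    intro p
    rw [hBtwdef, FinBorelAux.mem_fst_image]
    constructor
    · rintro ⟨t, ht1, ht2, ht3⟩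
      obtain ⟨z, hz, rfl⟩ := (hEmem _ _).1 ht1
      exact ⟨z, hz, ht2, ht3⟩
    · rintro ⟨z, hz, h1, h2⟩
      exact ⟨e z, (hEmem _ _).2 ⟨z, hz, rfl⟩, h1, h2⟩
  -- the minimum function m
  have hcls : ∀ x : X, ∃ y, (F x y ∧ ∀ z, F x z → e y ≤ e z) := by
    intro x
    obtain ⟨b, hb, hbmin⟩ := Set.exists_min_image {y | F x y} e (hfin x) ⟨x, hequiv.refl x⟩
    exact ⟨b, hb, hbmin⟩
  set m : X → X := fun x => (hcls x).choose with hmdef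
  have hmF : ∀ x, F x (m x) := fun x => (hcls x).choose_spec.1
  have hmmin : ∀ x z, F x z → e (m x) ≤ e z := fun x => (hcls x).choose_spec.2
  have hm_unique : ∀ x y, F x y → (∀ z, F x z → e y ≤ e z) → y = m x := by
    intro x y hy hymin
    exact heinj (le_antisymm (hymin (m x) (hmF x)) (hmmin x y hy))
  have hm_class : ∀ x y, F x y → m x = m y := by
    intro x y hxy
    refine (hm_unique x (m y) (hequiv.trans hxy (hmF y)) ?_).symm
    intro z hz
    exact hmmin y z (hequiv.trans (hequiv.symm hxy) hz)
  -- graph of m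
  have hGm : ∀ x y : X, ((x, y) ∈ Fs ∩ Bad1ᶜ ↔ y = m x) := by
    intro x y
    constructor
    · rintro ⟨h1, h2⟩
      refine hm_unique x y h1 fun z hz => ?_
      by_contra hlt
      exact h2 ((hBad1mem (x, y)).2 ⟨z, hz, not_le.1 hlt⟩)
    · rintro rfl
      refine ⟨hmF x, fun h => ?_⟩
      obtain ⟨z, hz, hlt⟩ := (hBad1mem _).1 h
      exact absurd (hmmin x z hz) (not_le.2 hlt)
  have hm_meas : Measurable m := by
    apply FinBorelAux.measurable_of_measurable_graph (g := m)
    have hgr : {p : X × X | m p.1 = p.2} = Fs ∩ Bad1ᶜ := by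
      ext ⟨x, y⟩
      rw [mem_setOf_eq, hGm x y, eq_comm]
    rw [hgr]
    exact hFborel.inter hBad1meas.compl
  -- the successor function T0
  have hsucc : ∀ x : X, (∃ z, F x z ∧ e x < e z) →
      ∃ y, (F x y ∧ e x < e y) ∧ ∀ z, F x z → e x < e z → e y ≤ e z := by
    intro x hx
    obtain ⟨z0, hz0⟩ := hx
    obtain ⟨b, hb, hbmin⟩ := Set.exists_min_image {y | F x y ∧ e x < e y} e
      ((hfin x).subset fun y hy => hy.1) ⟨z0, hz0⟩
    exact ⟨b, hb, fun z h1 h2 => hbmin z ⟨h1, h2⟩⟩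
  set T0 : X → X := fun x =>
    if h : ∃ z, F x z ∧ e x < e z then (hsucc x h).choose else m x with hT0def
  have hT0up : ∀ (x : X) (h : ∃ z, F x z ∧ e x < e z),
      (F x (T0 x) ∧ e x < e (T0 x)) ∧ ∀ z, F x z → e x < e z → e (T0 x) ≤ e z := by
    intro x h
    rw [hT0def]
    simp only [dif_pos h]
    exact (hsucc x h).choose_spec
  have hT0top : ∀ x : X, (¬ ∃ z, F x z ∧ e x < e z) → T0 x = m x := by
    intro x h
    rw [hT0def]
    simp only [dif_neg h]
  have hT0F : ∀ x, F x (T0 x) := by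
    intro x
    by_cases h : ∃ z, F x z ∧ e x < e z
    · exact (hT0up x h).1.1
    · rw [hT0top x h]; exact hmF x
  -- graph of T0
  set GT : Set (X × X) :=
    (Fs ∩ {p : X × X | p.1 ∈ Up} ∩ {p : X × X | e p.1 < e p.2} ∩ Btwᶜ)
      ∪ ({p : X × X | p.1 ∉ Up} ∩ {p : X × X | m p.1 = p.2}) with hGTdef
  have hGTmeas : MeasurableSet GT := by
    refine MeasurableSet.union ?_ ?_
    · exact ((hFborel.inter (measurable_fst hUpmeas)).inter
        (measurableSet_lt (he.measurable.comp measurable_fst)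
          (he.measurable.comp measurable_snd))).inter hBtwmeas.compl
    · refine MeasurableSet.inter ((measurable_fst hUpmeas).compl) ?_
      have hgr : {p : X × X | m p.1 = p.2}
          = (fun p : X × X => e (m p.1) - e (p.2)) ⁻¹' {0} := by
        ext p
        simp only [mem_setOf_eq, mem_preimage, mem_singleton_iff, sub_eq_zero]
        exact ⟨fun h => by rw [h], fun h => heinj h⟩
      rw [hgr]
      exact ((he.measurable.comp (hm_meas.comp measurable_fst)).sub
        (he.measurable.comp measurable_snd)) (measurableSet_singleton 0)
  have hGT : ∀ x y : X, ((x, y) ∈ GT ↔ y = T0 x) := by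
    intro x y
    by_cases hx : ∃ z, F x z ∧ e x < e z
    · have hxUp : x ∈ Up := (hUpmem x).2 hx
      constructor
      · rintro (⟨⟨⟨h1, -⟩, h2⟩, h3⟩ | ⟨h4, -⟩)
        · have hFxy : F x y := h1
          have hlt : e x < e y := h2
          have hle : e (T0 x) ≤ e y := (hT0up x hx).2 y hFxy hlt
          have hnlt : ¬ e (T0 x) < e y := fun hl =>
            h3 ((hBtwmem (x, y)).2 ⟨T0 x, hT0F x, (hT0up x hx).1.2, hl⟩)
          exact (heinj (le_antisymm hle (not_lt.1 hnlt))).symm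
        · exact absurd hxUp h4
      · rintro rfl
        refine Or.inl ⟨⟨⟨(hT0up x hx).1.1, hxUp⟩, (hT0up x hx).1.2⟩, fun h => ?_⟩
        obtain ⟨z, hz1, hz2, hz3⟩ := (hBtwmem _).1 h
        exact absurd ((hT0up x hx).2 z hz1 hz2) (not_le.2 hz3)
    · have hxUp : x ∉ Up := fun h => hx ((hUpmem x).1 h)
      constructor
      · rintro (⟨⟨⟨-, h2⟩, -⟩, -⟩ | ⟨-, h4⟩)
        · exact absurd h2 hxUp
        · rw [hT0top x hx]
          exact h4.symm
      · rintro rfl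
        rw [hT0top x hx]
        exact Or.inr ⟨hxUp, rfl⟩
  have hT0meas : Measurable T0 := by
    apply FinBorelAux.measurable_of_measurable_graph (g := T0)
    have hgr : {p : X × X | T0 p.1 = p.2} = GT := by
      ext ⟨x, y⟩
      rw [mem_setOf_eq, hGT x y, eq_comm]
    rw [hgr]
    exact hGTmeas
  -- bijectivity of T0
  have hT0inj : Function.Injective T0 := by
    intro a b hab
    by_cases ha : ∃ z, F a z ∧ e a < e z <;> by_cases hb : ∃ z, F b z ∧ e b < e z
    · have hFab : F a b :=
        hequiv.trans (hT0F a) (hequiv.symm (hab ▸ hT0F b))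
      rcases lt_trichotomy (e a) (e b) with hlt | heq | hlt
      · have h1 : e (T0 a) ≤ e b := (hT0up a ha).2 b hFab hlt
        have h2 : e b < e (T0 b) := (hT0up b hb).1.2
        rw [hab] at h1
        exact absurd h1 (not_le.2 h2)
      · exact heinj heq
      · have h1 : e (T0 b) ≤ e a := (hT0up b hb).2 a (hequiv.symm hFab) hlt
        have h2 : e a < e (T0 a) := (hT0up a ha).1.2
        rw [← hab] at h1
        exact absurd h1 (not_le.2 h2)
    · -- a has a successor, b is the top
      rw [hT0top b hb] at hab
      have hFba : F b a := hequiv.trans (hmF b) (hequiv.symm (hab ▸ hT0F a))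
      have h1 : e (m b) ≤ e a := hmmin b a hFba
      have h2 : e a < e (T0 a) := (hT0up a ha).1.2
      rw [hab] at h2
      exact absurd h1 (not_le.2 h2)
    · rw [hT0top a ha] at hab
      have hFab : F a b := hequiv.trans (hmF a) (hequiv.symm (hab ▸ hT0F b))
      have h1 : e (m a) ≤ e b := hmmin a b hFab
      have h2 : e b < e (T0 b) := (hT0up b hb).1.2
      rw [← hab] at h2
      exact absurd h1 (not_le.2 h2)
    · rw [hT0top a ha, hT0top b hb] at hab
      have h' : F b (m a) := by rw [hab]; exact hmF b
      have hFab : F a b := hequiv.trans (hmF a) (hequiv.symm h')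
      have hamax : ∀ z, F a z → e z ≤ e a := fun z hz =>
        not_lt.1 fun hlt => ha ⟨z, hz, hlt⟩
      have hbmax : ∀ z, F b z → e z ≤ e b := fun z hz =>
        not_lt.1 fun hlt => hb ⟨z, hz, hlt⟩
      exact heinj (le_antisymm (hbmax a (hequiv.symm hFab)) (hamax b hFab))
  have hT0surj : Function.Surjective T0 := by
    intro y
    by_cases hy : ∃ z, F y z ∧ e z < e y
    · obtain ⟨b, hb, hbmax⟩ := Set.exists_max_image {z | F y z ∧ e z < e y} e
        ((hfin y).subset fun z hz => hz.1) hy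
      refine ⟨b, ?_⟩
      have hFby : F b y := hequiv.symm hb.1
      have hbup : ∃ z, F b z ∧ e b < e z := ⟨y, hFby, hb.2⟩
      have h1 : e (T0 b) ≤ e y := (hT0up b hbup).2 y hFby hb.2
      have h2 : ¬ e (T0 b) < e y := by
        intro hlt
        have hmem : T0 b ∈ {z | F y z ∧ e z < e y} := ⟨hequiv.trans hb.1 (hT0F b), hlt⟩
        exact absurd (hT0up b hbup).1.2 (not_lt.2 (hbmax _ hmem))
      exact heinj (le_antisymm h1 (not_lt.1 h2))
    · obtain ⟨b, hb, hbmax⟩ := Set.exists_max_image {z | F y z} e (hfin y) ⟨y, hequiv.refl y⟩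
      refine ⟨b, ?_⟩
      have hbtop : ¬ ∃ z, F b z ∧ e b < e z := by
        rintro ⟨z, hz1, hz2⟩
        exact absurd (hbmax z (hequiv.trans hb hz1)) (not_le.2 hz2)
      rw [hT0top b hbtop]
      refine (hm_unique b y (hequiv.symm hb) ?_).symm
      intro z hz
      have hyz : F y z := hequiv.trans hb hz
      exact not_lt.1 fun hlt => hy ⟨z, hyz, hlt⟩
  let T : X ≃ X := Equiv.ofBijective T0 ⟨hT0inj, hT0surj⟩
  have hTcoe : ⇑T = T0 := rfl
  have hTsymm_meas : Measurable ⇑T.symm := by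
    apply FinBorelAux.measurable_of_measurable_graph (g := ⇑T.symm)
    have hgr : {p : X × X | T.symm p.1 = p.2} = Prod.swap ⁻¹' GT := by
      ext ⟨a, b⟩
      simp only [mem_setOf_eq, mem_preimage, Prod.swap_prod_mk]
      rw [hGT b a]
      exact T.symm_apply_eq
    rw [hgr]
    exact measurable_swap hGTmeas
  -- orbits
  have hiterF : ∀ (a : X) (n : ℕ), F a (T0^[n] a) := by
    intro a n
    induction n with
    | zero => exact hequiv.refl a
    | succ n ih =>
      rw [Function.iterate_succ_apply']
      exact hequiv.trans ih (hT0F _)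
  have reach : ∀ (x : X) (k : ℕ), ∀ y, F x y → {z | F x z ∧ e z < e y}.ncard = k →
      T0^[k] (m x) = y := by
    intro x k
    induction k with
    | zero =>
      intro y hy hcard
      have hempty : {z | F x z ∧ e z < e y} = ∅ :=
        (Set.ncard_eq_zero ((hfin x).subset fun z hz => hz.1)).1 hcard
      have hmin : ∀ z, F x z → e y ≤ e z := by
        intro z hz
        by_contra hlt
        have hzz : z ∈ {z | F x z ∧ e z < e y} := ⟨hz, not_le.1 hlt⟩
        rw [hempty] at hzz
        exact hzz
      rw [Function.iterate_zero_apply]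
      exact (hm_unique x y hy hmin).symm
    | succ k ih =>
      intro y hy hcard
      have hSfin : {z | F x z ∧ e z < e y}.Finite := (hfin x).subset fun z hz => hz.1
      have hSne : {z | F x z ∧ e z < e y}.Nonempty :=
        Set.nonempty_of_ncard_ne_zero (by omega)
      obtain ⟨b, hb, hbmax⟩ := Set.exists_max_image {z | F x z ∧ e z < e y} e hSfin hSne
      have hSb : {z | F x z ∧ e z < e b} = {z | F x z ∧ e z < e y} \ {b} := by
        ext z
        simp only [mem_setOf_eq, mem_diff, mem_singleton_iff]
        constructor
        · rintro ⟨h1, h2⟩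
          exact ⟨⟨h1, lt_trans h2 hb.2⟩, fun hzb => by rw [hzb] at h2; exact lt_irrefl _ h2⟩
        · rintro ⟨⟨h1, h2⟩, h3⟩
          refine ⟨h1, ?_⟩
          exact lt_of_le_of_ne (hbmax z ⟨h1, h2⟩) fun hee => h3 (heinj hee)
      have hScard : {z | F x z ∧ e z < e b}.ncard = k := by
        rw [hSb, Set.ncard_diff_singleton_of_mem hb, hcard]
        omega
      have hb' := ih b hb.1 hScard
      have hFby : F b y := hequiv.trans (hequiv.symm hb.1) hy
      have hbup : ∃ z, F b z ∧ e b < e z := ⟨y, hFby, hb.2⟩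
      have h1 : e (T0 b) ≤ e y := (hT0up b hbup).2 y hFby hb.2
      have h2 : ¬ e (T0 b) < e y := by
        intro hlt
        have hmem : T0 b ∈ {z | F x z ∧ e z < e y} := ⟨hequiv.trans hb.1 (hT0F b), hlt⟩
        exact absurd (hT0up b hbup).1.2 (not_lt.2 (hbmax _ hmem))
      have hT0b : T0 b = y := heinj (le_antisymm h1 (not_lt.1 h2))
      rw [Function.iterate_succ_apply', hb', hT0b]
  have hperiod : ∀ x : X, T0^[{z | F x z}.ncard] (m x) = m x := by
    intro x
    obtain ⟨w, hw, hwmax⟩ := Set.exists_max_image {z | F x z} e (hfin x) ⟨x, hequiv.refl x⟩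
    have hN : 0 < {z | F x z}.ncard := (Set.ncard_pos (hfin x)).2 ⟨x, hequiv.refl x⟩
    have hCw : {z | F x z ∧ e z < e w} = {z | F x z} \ {w} := by
      ext z
      simp only [mem_setOf_eq, mem_diff, mem_singleton_iff]
      constructor
      · rintro ⟨h1, h2⟩
        exact ⟨h1, fun hzw => by rw [hzw] at h2; exact lt_irrefl _ h2⟩
      · rintro ⟨h1, h2⟩
        exact ⟨h1, lt_of_le_of_ne (hwmax z h1) fun hee => h2 (heinj hee)⟩
    have hcard : {z | F x z ∧ e z < e w}.ncard = {z | F x z}.ncard - 1 := by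
      rw [hCw, Set.ncard_diff_singleton_of_mem hw]
    have hr := reach x _ w hw hcard
    have hwtop : ¬ ∃ z, F w z ∧ e w < e z := by
      rintro ⟨z, hz1, hz2⟩
      exact absurd (hwmax z (hequiv.trans hw hz1)) (not_le.2 hz2)
    have hT0w : T0 w = m x := by
      rw [hT0top w hwtop]
      exact (hm_class x w hw).symm
    have hsucc_pred : {z | F x z}.ncard = ({z | F x z}.ncard - 1) + 1 := by omega
    rw [hsucc_pred, Function.iterate_succ_apply', hr, hT0w]
  have hperiod_mul : ∀ (x : X) (j : ℕ), T0^[j * {z | F x z}.ncard] (m x) = m x := by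
    intro x j
    induction j with
    | zero => simp
    | succ j ih =>
      have harith : (j + 1) * {z | F x z}.ncard
          = j * {z | F x z}.ncard + {z | F x z}.ncard := by ring
      rw [harith, Function.iterate_add_apply, hperiod x, ih]
  constructor
  · refine ⟨{x | m x = x}, ?_, ?_⟩
    · have hgr : {x | m x = x} = (fun x => e (m x) - e x) ⁻¹' {0} := by
        ext x
        simp only [mem_setOf_eq, mem_preimage, mem_singleton_iff, sub_eq_zero]
        exact ⟨fun h => by rw [h], fun h => heinj h⟩
      rw [hgr]
      exact ((he.measurable.comp hm_meas).sub he.measurable) (measurableSet_singleton 0)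
    · intro x
      refine ⟨m x, ⟨(hm_class x (m x) (hmF x)).symm, hmF x⟩, ?_⟩
      rintro y ⟨hyB, hyF⟩
      have h1 : m x = m y := hm_class x y hyF
      exact (show m y = y from hyB).symm.trans h1.symm
  · refine ⟨T, hT0meas, hTsymm_meas, ?_⟩
    intro x y
    rw [hTcoe]
    constructor
    · intro hxy
      obtain ⟨a, ha⟩ : ∃ a, T0^[a] (m x) = x := ⟨_, reach x _ x (hequiv.refl x) rfl⟩
      obtain ⟨b, hb⟩ : ∃ b, T0^[b] (m x) = y := ⟨_, reach x _ y hxy rfl⟩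
      have hN1 : 1 ≤ {z | F x z}.ncard := (Set.ncard_pos (hfin x)).2 ⟨x, hequiv.refl x⟩
      refine ⟨b + a * ({z | F x z}.ncard - 1), ?_⟩
      have harith : b + a * ({z | F x z}.ncard - 1) + a = b + a * {z | F x z}.ncard := by
        obtain ⟨n, hn⟩ : ∃ n, {z | F x z}.ncard = n + 1 := ⟨{z | F x z}.ncard - 1, by omega⟩
        rw [hn, Nat.add_sub_cancel, Nat.mul_succ]
        omega
      calc T0^[b + a * ({z | F x z}.ncard - 1)] x
          = T0^[b + a * ({z | F x z}.ncard - 1)] (T0^[a] (m x)) := by rw [ha]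
        _ = T0^[b + a * ({z | F x z}.ncard - 1) + a] (m x) :=
            (Function.iterate_add_apply T0 _ a (m x)).symm
        _ = T0^[b + a * {z | F x z}.ncard] (m x) := by rw [harith]
        _ = T0^[b] (T0^[a * {z | F x z}.ncard] (m x)) :=
            Function.iterate_add_apply T0 b _ (m x)
        _ = T0^[b] (m x) := by rw [hperiod_mul x a]
        _ = y := hb
    · rintro ⟨n, rfl⟩
      exact hiterF x n


end
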